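/- If d ≥ 3 is an integer such that (2^d - 1)(2^{d-1} - 1)/3 divides d(2^d - 1), then d = 3 or d = 5. -/
import Mathlib

lemma aux_pow_lower : ∀ d, 6 ≤ d → 3 * d + 4 ≤ 2 ^ (d - 1) := by
  intro d hd
  induction d with
  | zero => omega
  | succ n ih =>
    rcases Nat.lt_or_ge n 6 with h | h
    · interval_cases n <;> simp_all
    · have := ih (by omega)
      have hn : n - 1 + 1 = n := by omega
      have : 2 ^ n = 2 * 2 ^ (n - 1) := by
        rw [← pow_succ']
        congr 1
        omega
      simp only [Nat.succ_sub_one]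
      omega

/-- If `d ≥ 3` is an integer such that `(2^d - 1)(2^{d-1} - 1)/3` divides `d(2^d - 1)`,
then `d = 3` or `d = 5`. -/
theorem stmt_6 (d : ℕ) (hd : 3 ≤ d)
    (hdvd : (2 ^ d - 1) * (2 ^ (d - 1) - 1) / 3 ∣ d * (2 ^ d - 1)) :
    d = 3 ∨ d = 5 := by
  have hdle : d ≤ 5 := by
    by_contra h
    push_neg at h
    have h6 : 6 ≤ d := h
    have hp : 0 < 2 ^ d - 1 := by
      have : 2 ^ 1 ≤ 2 ^ d := Nat.pow_le_pow_right (by norm_num) (by omega)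
      omega
    have hle : (2 ^ d - 1) * (2 ^ (d - 1) - 1) / 3 ≤ d * (2 ^ d - 1) :=
      Nat.le_of_dvd (by positivity) hdvd
    have hlow : (2 ^ d - 1) * ((2 ^ (d - 1) - 1) / 3) ≤ (2 ^ d - 1) * (2 ^ (d - 1) - 1) / 3 := by
      rw [Nat.le_div_iff_mul_le (by norm_num)]
      calc (2 ^ d - 1) * ((2 ^ (d - 1) - 1) / 3) * 3
          = (2 ^ d - 1) * ((2 ^ (d - 1) - 1) / 3 * 3) := by ring
        _ ≤ (2 ^ d - 1) * (2 ^ (d - 1) - 1) :=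
          Nat.mul_le_mul_left _ (Nat.div_mul_le_self _ _)
    have hbig : d + 1 ≤ (2 ^ (d - 1) - 1) / 3 := by
      have := aux_pow_lower d h6
      omega
    have : (2 ^ d - 1) * (d + 1) ≤ d * (2 ^ d - 1) := by
      calc (2 ^ d - 1) * (d + 1) ≤ (2 ^ d - 1) * ((2 ^ (d - 1) - 1) / 3) :=
            Nat.mul_le_mul_left _ hbig
        _ ≤ (2 ^ d - 1) * (2 ^ (d - 1) - 1) / 3 := hlow
        _ ≤ d * (2 ^ d - 1) := hle
    nlinarith
  interval_cases d
  · exact Or.inl rfl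
  · norm_num at hdvd
  · exact Or.inr rfl
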